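/- Median regression variance bound (Proposition on SC condition): let g(u,y) = |u − y|. Suppose for every x the conditional cdf F_x of Y given X = x is continuous with unique median s(x), and there exist a(x), b(x) > 0 with |F_x(u) − F_x(s(x))| ≥ a(x)·min(|u − s(x)|, b(x)) for all u. Let a_m = inf_x a(x) > 0 and μ_m = inf_x a(x)b(x) > 0. Then for all u, v ∈ ℝ: E[(g(u,Y) − g(v,Y))² | X] ≤ max( 4/a_m, (4/μ_m)·|u − v| ) · ( ℓ_X(u) + ℓ_X(v) ), where ℓ_X(u) = E[g(u,Y)|X] − inf_w E[g(w,Y)|X]. -/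

import Mathlib

open MeasureTheory
open Set

lemma indic_int (ν : Measure ℝ) [IsProbabilityMeasure ν] (t : ℝ) :
    ∫ y, (if y ≤ t then (1:ℝ) else 0) ∂ν = (ν (Iic t)).toReal := by
  have : (fun y => if y ≤ t then (1:ℝ) else 0) = (Iic t).indicator (fun _ => 1) := by
    funext y; simp [Set.indicator_apply, Set.mem_Iic]
  rw [this, integral_indicator measurableSet_Iic]
  simp
  rfl

lemma G_eq {m u : ℝ} (h : m ≤ u) (y : ℝ) :
    (∫ t in Ioc m u, (if y ≤ t then (1:ℝ) else 0)) = max (u - max m y) 0 := by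
  have : (fun t => if y ≤ t then (1:ℝ) else 0) = (Ici y).indicator (fun _ => 1) := by
    funext t; simp [Set.indicator_apply, Set.mem_Ici]
  rw [this, setIntegral_indicator measurableSet_Ici, setIntegral_const]
  rcases le_or_gt y m with hy | hy
  · have hs : Ioc m u ∩ Ici y = Ioc m u := by
      apply inter_eq_left.mpr
      intro t ht; exact hy.trans ht.1.le
    rw [hs, Real.volume_real_Ioc_of_le (by linarith)]
    simp [max_eq_left hy, max_eq_left (by linarith : (0:ℝ) ≤ u - m)]
  · rcases le_or_gt y u with hyu | hyu
    · have hs : Ioc m u ∩ Ici y = Icc y u := by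
        ext t; simp only [mem_inter_iff, mem_Ioc, mem_Ici, mem_Icc]
        constructor
        · rintro ⟨⟨_, h2⟩, h3⟩; exact ⟨h3, h2⟩
        · rintro ⟨h1, h2⟩; exact ⟨⟨lt_of_lt_of_le hy h1, h2⟩, h1⟩
      rw [hs, Real.volume_real_Icc_of_le (by linarith)]
      simp [max_eq_right hy.le, max_eq_left (by linarith : (0:ℝ) ≤ u - y)]
    · have hs : Ioc m u ∩ Ici y = ∅ := by
        ext t; simp only [mem_inter_iff, mem_Ioc, mem_Ici, mem_empty_iff_false, iff_false]
        rintro ⟨⟨_, h2⟩, h3⟩; linarith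
      rw [hs]
      simp [max_eq_right hy.le, max_eq_right (by linarith : u - y ≤ 0)]

lemma ptwise {m u : ℝ} (h : m ≤ u) (y : ℝ) :
    |u - y| - |m - y| = 2 * max (u - max m y) 0 - (u - m) := by
  rcases le_or_gt y m with hy | hy
  · rw [abs_of_nonneg (by linarith), abs_of_nonneg (by linarith),
      max_eq_left hy, max_eq_left (by linarith : (0:ℝ) ≤ u - m)]; ring
  · rcases le_or_gt y u with hyu | hyu
    · rw [abs_of_nonneg (by linarith), abs_of_nonpos (by linarith),
        max_eq_right hy.le, max_eq_left (by linarith : (0:ℝ) ≤ u - y)]; ring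
    · rw [abs_of_nonpos (by linarith), abs_of_nonpos (by linarith),
        max_eq_right hy.le, max_eq_right (by linarith : u - y ≤ 0)]; ring

lemma lemA (ν : Measure ℝ) [IsProbabilityMeasure ν] {m u : ℝ} (h : m ≤ u) :
    ∫ y, (|u - y| - |m - y|) ∂ν
      = 2 * ∫ t in Ioc m u, ((ν (Iic t)).toReal - 1/2) := by
  have hfin : IsFiniteMeasure (volume.restrict (Ioc m u)) := by
    constructor
    rw [Measure.restrict_apply_univ, Real.volume_Ioc]
    exact ENNReal.ofReal_lt_top
  -- measurability & integrability of F
  have hFmono : Monotone (fun t => (ν (Iic t)).toReal) := by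
    intro t t' htt
    exact ENNReal.toReal_mono (measure_ne_top ν _) (measure_mono (Iic_subset_Iic.mpr htt))
  have hFmeas : Measurable (fun t => (ν (Iic t)).toReal) := hFmono.measurable
  have hFint : IntegrableOn (fun t => (ν (Iic t)).toReal) (Ioc m u) := by
    apply Integrable.mono' (integrable_const (1:ℝ)) hFmeas.aestronglyMeasurable
    filter_upwards with t
    rw [Real.norm_eq_abs, abs_of_nonneg ENNReal.toReal_nonneg]
    exact (ENNReal.toReal_le_of_le_ofReal zero_le_one (by simpa using prob_le_one))
  -- Fubini
  have hswap : ∫ y, (∫ t in Ioc m u, (if y ≤ t then (1:ℝ) else 0)) ∂ν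
      = ∫ t in Ioc m u, (ν (Iic t)).toReal := by
    rw [integral_integral_swap]
    · exact setIntegral_congr_fun measurableSet_Ioc (fun t _ => indic_int ν t)
    · apply Integrable.mono' (integrable_const (1:ℝ))
      · exact (Measurable.ite (measurableSet_le measurable_fst measurable_snd)
          measurable_const measurable_const).aestronglyMeasurable
      · filter_upwards with p
        by_cases hp : p.1 ≤ p.2 <;> simp [Function.uncurry, hp]
  have hGint : Integrable (fun y => max (u - max m y) 0) ν := by
    apply Integrable.mono' (integrable_const (u - m))
    · exact ((continuous_const.sub (continuous_const.max continuous_id)).max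
        continuous_const).aestronglyMeasurable
    · filter_upwards with y
      rw [Real.norm_eq_abs, abs_of_nonneg (le_max_right _ _)]
      rcases le_or_gt (u - max m y) 0 with h1 | h1
      · rw [max_eq_right h1]; linarith
      · rw [max_eq_left h1.le]
        have := le_max_left m y; linarith
  calc ∫ y, (|u - y| - |m - y|) ∂ν
      = ∫ y, (2 * max (u - max m y) 0 - (u - m)) ∂ν := by
        exact integral_congr_ae (Filter.Eventually.of_forall (ptwise h))
    _ = 2 * (∫ y, max (u - max m y) 0 ∂ν) - (u - m) := by
        rw [integral_sub (hGint.const_mul 2) (integrable_const _),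
          integral_const_mul, integral_const]
        simp
    _ = 2 * (∫ t in Ioc m u, (ν (Iic t)).toReal) - (u - m) := by
        rw [← hswap]
        congr 1
        refine congrArg (2 * ·) (integral_congr_ae (Filter.Eventually.of_forall ?_))
        intro y
        exact (G_eq h y).symm
    _ = 2 * ∫ t in Ioc m u, ((ν (Iic t)).toReal - 1/2) := by
        rw [integral_sub hFint (integrable_const _), setIntegral_const,
          Real.volume_real_Ioc_of_le (by linarith), smul_eq_mul]
        ring

lemma int_lin1 {p q : ℝ} (h : p ≤ q) : ∫ t in Ioc p q, (t - p) = (q - p)^2/2 := by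
  rw [← intervalIntegral.integral_of_le h]
  rw [intervalIntegral.integral_sub (intervalIntegral.intervalIntegrable_id)
    (intervalIntegrable_const), integral_id, intervalIntegral.integral_const,
    smul_eq_mul]
  ring

lemma int_lin2 {p q : ℝ} (h : p ≤ q) : ∫ t in Ioc p q, (q - t) = (q - p)^2/2 := by
  rw [← intervalIntegral.integral_of_le h]
  rw [intervalIntegral.integral_sub (intervalIntegrable_const)
    (intervalIntegral.intervalIntegrable_id), integral_id, intervalIntegral.integral_const,
    smul_eq_mul]
  ring

lemma min_scale {r d bb : ℝ} (hr0 : 0 ≤ r) (hrd : r ≤ d) (hd : 0 < d) (hbb : 0 < bb) :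
    (r / d) * min d bb ≤ min r bb := by
  rcases le_or_gt r bb with h1 | h1
  · rw [min_eq_left h1]
    calc (r / d) * min d bb ≤ (r / d) * d := by
          apply mul_le_mul_of_nonneg_left (min_le_left _ _) (by positivity)
      _ = r := by field_simp
  · rw [min_eq_right h1.le, min_eq_right (by linarith : bb ≤ d)]
    calc (r / d) * bb ≤ 1 * bb := by
          apply mul_le_mul_of_nonneg_right _ hbb.le
          rw [div_le_one hd]; exact hrd
      _ = bb := one_mul bb

lemma excess_lb (ν : Measure ℝ) [IsProbabilityMeasure ν] (m w aa bb am μm : ℝ)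
    (hmed : (ν (Iic m)).toReal = 1/2)
    (haa : 0 < aa) (hbb : 0 < bb)
    (hinc : ∀ t, aa * min |t - m| bb ≤ |(ν (Iic t)).toReal - (ν (Iic m)).toReal|)
    (ham : 0 < am) (hμm : 0 < μm) (ham' : am ≤ aa) (hμm' : μm ≤ aa * bb) :
    |w - m| * min (am * |w - m|) μm ≤ ∫ y, (|w - y| - |m - y|) ∂ν := by
  have hFmono : Monotone (fun t => (ν (Iic t)).toReal) := by
    intro t t' htt
    exact ENNReal.toReal_mono (measure_ne_top ν _) (measure_mono (Iic_subset_Iic.mpr htt))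
  have hFint : ∀ p q : ℝ, IntegrableOn (fun t => ((ν (Iic t)).toReal - 1/2)) (Ioc p q) := by
    intro p q
    haveI : IsFiniteMeasure (volume.restrict (Ioc p q)) := by
      constructor
      rw [Measure.restrict_apply_univ, Real.volume_Ioc]
      exact ENNReal.ofReal_lt_top
    apply Integrable.mono' (integrable_const (3/2 : ℝ))
      ((hFmono.measurable.sub measurable_const).aestronglyMeasurable)
    filter_upwards with t
    rw [Real.norm_eq_abs, Pi.sub_apply]
    have h1 : (0:ℝ) ≤ (ν (Iic t)).toReal := ENNReal.toReal_nonneg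
    have h2 : (ν (Iic t)).toReal ≤ 1 :=
      ENNReal.toReal_le_of_le_ofReal zero_le_one (by simpa using prob_le_one)
    rw [abs_le]; constructor <;> linarith
  rcases eq_or_lt_of_le (abs_nonneg (w - m)) with hd0 | hd0
  · have hw : w = m := by have := abs_eq_zero.mp hd0.symm; linarith
    subst hw
    simp
  set d := |w - m| with hdd
  set c := min (am * d) μm with hcc
  have hc0 : 0 < c := lt_min (by positivity) hμm
  have hkey : ∀ t : ℝ, |t - m| ≤ d → |t - m| * (c / d) ≤ aa * min |t - m| bb := by
    intro t htd
    calc (|t - m|) * (c / d) = (|t - m| / d) * c := by ring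
      _ ≤ (|t - m| / d) * min (aa * d) (aa * bb) := by
          apply mul_le_mul_of_nonneg_left _ (by positivity)
          exact min_le_min (mul_le_mul_of_nonneg_right ham' hd0.le) hμm'
      _ = (|t - m| / d) * (aa * min d bb) := by
          rw [mul_min_of_nonneg _ _ haa.le]
      _ = aa * ((|t - m| / d) * min d bb) := by ring
      _ ≤ aa * min |t - m| bb := by
          apply mul_le_mul_of_nonneg_left _ haa.le
          exact min_scale (abs_nonneg _) htd hd0 hbb
  rcases le_or_gt m w with hmw | hmw
  · have hd : d = w - m := abs_of_nonneg (by linarith)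
    rw [lemA ν hmw]
    have hlow : ∀ t ∈ Ioc m w, (t - m) * (c / d) ≤ (ν (Iic t)).toReal - 1/2 := by
      intro t ht
      have h1 : |t - m| = t - m := abs_of_nonneg (by linarith [ht.1.le])
      have h2 : (ν (Iic t)).toReal - 1/2 = |(ν (Iic t)).toReal - (ν (Iic m)).toReal| := by
        rw [abs_of_nonneg (by linarith [hFmono ht.1.le] :
          (0:ℝ) ≤ (ν (Iic t)).toReal - (ν (Iic m)).toReal), hmed]
      rw [h2]
      have h3 := hkey t (by rw [h1, hd]; linarith [ht.2])
      rw [h1] at h3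
      have h4 := hinc t
      rw [h1] at h4
      exact h3.trans h4
    have hmono : ∫ t in Ioc m w, (t - m) * (c / d)
        ≤ ∫ t in Ioc m w, ((ν (Iic t)).toReal - 1/2) :=
      setIntegral_mono_on
        (((continuous_id.sub continuous_const).mul continuous_const).integrableOn_Ioc)
        (hFint m w) measurableSet_Ioc hlow
    have hval : ∫ t in Ioc m w, (t - m) * (c / d) = d * c / 2 := by
      rw [integral_mul_const, int_lin1 hmw, ← hd]
      field_simp
    rw [hval] at hmono
    linarith
  · have hd : d = m - w := by rw [hdd, abs_of_nonpos (by linarith : w - m ≤ 0)]; ring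
    have heq : ∫ y, (|w - y| - |m - y|) ∂ν = -∫ y, (|m - y| - |w - y|) ∂ν := by
      rw [← integral_neg]
      congr 1; funext y; ring
    rw [heq, lemA ν hmw.le]
    have h5 : -(2 * ∫ t in Ioc w m, ((ν (Iic t)).toReal - 1/2))
        = 2 * ∫ t in Ioc w m, -((ν (Iic t)).toReal - 1/2) := by
      rw [integral_neg]; ring
    rw [h5]
    have hlow : ∀ t ∈ Ioc w m, (m - t) * (c / d) ≤ -((ν (Iic t)).toReal - 1/2) := by
      intro t ht
      have h1 : |t - m| = m - t := by
        rw [abs_of_nonpos (by linarith [ht.2] : t - m ≤ 0)]; ring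
      have h2 : -((ν (Iic t)).toReal - 1/2) = |(ν (Iic t)).toReal - (ν (Iic m)).toReal| := by
        rw [abs_of_nonpos (by linarith [hFmono ht.2] :
          (ν (Iic t)).toReal - (ν (Iic m)).toReal ≤ 0), hmed]
      rw [h2]
      have h3 := hkey t (by rw [h1, hd]; linarith [ht.1])
      rw [h1] at h3
      have h4 := hinc t
      rw [h1] at h4
      exact h3.trans h4
    have hmono : ∫ t in Ioc w m, (m - t) * (c / d)
        ≤ ∫ t in Ioc w m, -((ν (Iic t)).toReal - 1/2) :=
      setIntegral_mono_on
        (((continuous_const.sub continuous_id).mul continuous_const).integrableOn_Ioc)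
        ((hFint w m).neg) measurableSet_Ioc hlow
    have hval : ∫ t in Ioc w m, (m - t) * (c / d) = d * c / 2 := by
      rw [integral_mul_const, int_lin2 hmw.le, ← hd]
      field_simp
    rw [hval] at hmono
    linarith

lemma arith_half {D du dv am μm : ℝ} (ham : 0 < am) (hμm : 0 < μm)
    (hdu : 0 ≤ du) (hdv : 0 ≤ dv) (hD : D ≤ du + dv) (hD0 : 0 ≤ D) (hvu : dv ≤ du) :
    D^2 ≤ max (4/am) ((4/μm)*D) * (du * min (am*du) μm + dv * min (am*dv) μm) := by
  have hdu2 : D / 2 ≤ du := by linarith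
  have htv : 0 ≤ dv * min (am*dv) μm := by
    apply mul_nonneg hdv (le_min (by positivity) hμm.le)
  have hM0 : (0:ℝ) ≤ max (4/am) ((4/μm)*D) := le_trans (by positivity) (le_max_left _ _)
  rcases min_cases (am*du) μm with ⟨hmin, hcase⟩ | ⟨hmin, hcase⟩
  · have h1 : (4/am) * (du * (am*du)) ≤ max (4/am) ((4/μm)*D) * (du * min (am*du) μm + dv * min (am*dv) μm) := by
      rw [hmin]
      apply mul_le_mul (le_max_left _ _) (by linarith) (by positivity) hM0
    have h2 : (4/am) * (du * (am*du)) = 4 * du^2 := by field_simp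
    nlinarith
  · have h1 : ((4/μm)*D) * (du * μm) ≤ max (4/am) ((4/μm)*D) * (du * min (am*du) μm + dv * min (am*dv) μm) := by
      rw [hmin]
      apply mul_le_mul (le_max_right _ _) (by linarith) (by positivity) hM0
    have h2 : ((4/μm)*D) * (du * μm) = 4 * D * du := by field_simp
    nlinarith

lemma arith {D du dv am μm : ℝ} (ham : 0 < am) (hμm : 0 < μm)
    (hdu : 0 ≤ du) (hdv : 0 ≤ dv) (hD : D ≤ du + dv) (hD0 : 0 ≤ D) :
    D^2 ≤ max (4/am) ((4/μm)*D) * (du * min (am*du) μm + dv * min (am*dv) μm) := by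
  rcases le_total dv du with h | h
  · exact arith_half ham hμm hdu hdv hD hD0 h
  · have := arith_half ham hμm hdv hdu (by linarith) hD0 h
    linarith [this]


/-- Proposition (prop_sc): median regression variance bound. For each `x`, let `ν x` be
the conditional law of `Y` given `X = x`, with continuous cdf `F x`, unique conditional
median `s x`, and local increase condition
`|F x u - F x (s x)| ≥ a x · min(|u - s x|, b x)`. With `a_m ≤ a x` and
`μ_m ≤ a x * b x` (`a_m, μ_m > 0`), the conditional excess risks
`ℓx x u = E[|u - Y| | X = x] - E[|s x - Y| | X = x]` satisfy, for all `x, u, v`: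
`E[(|u - Y| - |v - Y|)² | X = x] ≤ max (4/a_m) ((4/μ_m)|u - v|) (ℓx x u + ℓx x v)`. -/
theorem stmt_17 {α : Type*} (ν : α → Measure ℝ) [∀ x, IsProbabilityMeasure (ν x)]
    (hYint : ∀ x, Integrable (fun y => y) (ν x))
    (F : α → ℝ → ℝ) (hF : ∀ x u, F x u = ((ν x) (Set.Iic u)).toReal)
    (hFcont : ∀ x, Continuous (F x))
    (s : α → ℝ) (hmed : ∀ x, F x (s x) = 1 / 2)
    (a b : α → ℝ) (ha : ∀ x, 0 < a x) (hb : ∀ x, 0 < b x)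
    (hinc : ∀ x u, a x * min |u - s x| (b x) ≤ |F x u - F x (s x)|)
    (am μm : ℝ) (ham : 0 < am) (hμm : 0 < μm)
    (ham' : ∀ x, am ≤ a x) (hμm' : ∀ x, μm ≤ a x * b x)
    (ℓx : α → ℝ → ℝ)
    (hℓx : ∀ x u, ℓx x u = (∫ y, |u - y| ∂(ν x)) - ∫ y, |s x - y| ∂(ν x)) :
    ∀ x u v, (∫ y, (|u - y| - |v - y|) ^ 2 ∂(ν x))
      ≤ max (4 / am) ((4 / μm) * |u - v|) * (ℓx x u + ℓx x v) := by
  intro x u v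
  set D := |u - v| with hD
  -- Step 1 : LHS ≤ D^2
  have hstep1 : (∫ y, (|u - y| - |v - y|) ^ 2 ∂(ν x)) ≤ D^2 := by
    have hint : Integrable (fun y => (|u - y| - |v - y|) ^ 2) (ν x) := by
      apply Integrable.mono' (integrable_const (D^2))
      · exact (((continuous_const.sub continuous_id).abs.sub
          (continuous_const.sub continuous_id).abs).pow 2).aestronglyMeasurable
      · filter_upwards with y
        rw [Real.norm_eq_abs, abs_of_nonneg (sq_nonneg _)]
        have habs : |(|u - y| - |v - y|)| ≤ D := by
          have := abs_abs_sub_abs_le_abs_sub (u - y) (v - y)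
          have he : u - y - (v - y) = u - v := by ring
          rw [he] at this
          exact this
        have := abs_le.mp habs
        nlinarith [abs_nonneg (u - v)]
    calc (∫ y, (|u - y| - |v - y|) ^ 2 ∂(ν x)) ≤ ∫ _, D^2 ∂(ν x) := by
          apply integral_mono hint (integrable_const _)
          intro y
          have habs : |(|u - y| - |v - y|)| ≤ D := by
            have := abs_abs_sub_abs_le_abs_sub (u - y) (v - y)
            have he : u - y - (v - y) = u - v := by ring
            rw [he] at this
            exact this
          have := abs_le.mp habs
          show (|u - y| - |v - y|)^2 ≤ D^2
          nlinarith [abs_nonneg (u - v)]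
      _ = D^2 := by simp
  -- Step 2 : excess risk lower bounds
  have hint1 : ∀ w : ℝ, Integrable (fun y => |w - y|) (ν x) :=
    fun w => ((integrable_const w).sub (hYint x)).abs
  have hℓrep : ∀ w : ℝ, ℓx x w = ∫ y, (|w - y| - |s x - y|) ∂(ν x) := by
    intro w
    rw [hℓx, ← integral_sub (hint1 w) (hint1 (s x))]
  have hmed' : ((ν x) (Set.Iic (s x))).toReal = 1/2 := by
    rw [← hF]; exact hmed x
  have hinc' : ∀ t, a x * min |t - s x| (b x)
      ≤ |((ν x) (Set.Iic t)).toReal - ((ν x) (Set.Iic (s x))).toReal| := by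
    intro t
    have := hinc x t
    rwa [hF x t, hF x (s x)] at this
  have hexc : ∀ w : ℝ, |w - s x| * min (am * |w - s x|) μm ≤ ℓx x w := by
    intro w
    rw [hℓrep w]
    exact excess_lb (ν x) (s x) w (a x) (b x) am μm hmed' (ha x) (hb x) hinc'
      ham hμm (ham' x) (hμm' x)
  -- Step 3 : arithmetic
  have harith := arith (du := |u - s x|) (dv := |v - s x|) ham hμm
    (abs_nonneg _) (abs_nonneg _)
    (by
      have := abs_sub_abs_le_abs_sub (u - s x) (v - s x)
      calc D = |u - s x - (v - s x)| := by rw [hD]; congr 1; ring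
        _ ≤ |u - s x| + |v - s x| := abs_sub _ _)
    (abs_nonneg _)
  have hM0 : (0:ℝ) ≤ max (4/am) ((4/μm)*D) := le_trans (by positivity) (le_max_left _ _)
  calc (∫ y, (|u - y| - |v - y|) ^ 2 ∂(ν x)) ≤ D^2 := hstep1
    _ ≤ max (4/am) ((4/μm)*D) *
        (|u - s x| * min (am * |u - s x|) μm + |v - s x| * min (am * |v - s x|) μm) := harith
    _ ≤ max (4/am) ((4/μm)*D) * (ℓx x u + ℓx x v) := by
        apply mul_le_mul_of_nonneg_left _ hM0
        exact add_le_add (hexc u) (hexc v)
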